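/- Define μ : ℕ → ℕ by μ(1) = 1 and μ(n) = min_{1 ≤ p ≤ n-1} n·μ(p)·μ(n-p). Then for every integer i ≥ 0, μ(2^i) = 2^(2·2^i - 2)/2^i, i.e., μ(2^i) = τ(2^i). -/

import Mathlib

/-- `μ(1) = 1` and `μ(n) = min_{1 ≤ p ≤ n-1} n·μ(p)·μ(n-p)` for `n ≥ 2`. -/
def mu : ℕ → ℕ
  | 0 => 1
  | 1 => 1
  | n + 2 =>
    (Finset.Icc 1 (n + 1)).attach.inf'
      (Finset.attach_nonempty_iff.mpr (Finset.nonempty_Icc.mpr (by omega)))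
      (fun p => (n + 2) * mu p.1 * mu (n + 2 - p.1))
decreasing_by
  · have := p.2; simp only [Finset.mem_Icc] at this; omega
  · have := p.2; simp only [Finset.mem_Icc] at this; omega

lemma mu_eq (n : ℕ) : mu (n+2) = (Finset.Icc 1 (n + 1)).attach.inf'
      (Finset.attach_nonempty_iff.mpr (Finset.nonempty_Icc.mpr (by omega)))
      (fun p => (n + 2) * mu p.1 * mu (n + 2 - p.1)) := by rw [mu]

/-- Lower bound: `4^(n-1) ≤ n · μ(n)`. -/
lemma mu_lb : ∀ n : ℕ, 1 ≤ n → 4 ^ (n - 1) ≤ n * mu n := by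
  intro n
  induction n using Nat.strong_induction_on with
  | _ n ih =>
    intro hn
    match n, hn with
    | 1, _ => simp [mu]
    | (m+2), _ =>
      obtain ⟨a, ha, hval⟩ := Finset.exists_mem_eq_inf'
        (Finset.attach_nonempty_iff.mpr (Finset.nonempty_Icc.mpr (by omega : (1:ℕ) ≤ m+1)))
        (fun p : {x // x ∈ Finset.Icc 1 (m+1)} => (m + 2) * mu p.1 * mu (m + 2 - p.1))
      have hmem := a.2
      simp only [Finset.mem_Icc] at hmem
      set p := a.1 with hp
      set q := m + 2 - p with hq
      have hp1 : 1 ≤ p := hmem.1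
      have hq1 : 1 ≤ q := by omega
      have hpq : p + q = m + 2 := by omega
      have hmu : mu (m+2) = (m+2) * mu p * mu q := by
        rw [mu_eq]; rw [hval]
      have h1 : 4 ^ (p - 1) ≤ p * mu p := ih p (by omega) hp1
      have h2 : 4 ^ (q - 1) ≤ q * mu q := ih q (by omega) hq1
      have hamgm : 4 * (p * q) ≤ (m + 2) * (m + 2) := by nlinarith [sq_nonneg (p - q : ℤ)]
      have key : 4 * ((p * mu p) * (q * mu q)) ≤ (m+2) * ((m+2) * mu p * mu q) := by
        calc 4 * ((p * mu p) * (q * mu q)) = (4 * (p * q)) * (mu p * mu q) := by ring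
          _ ≤ ((m+2) * (m+2)) * (mu p * mu q) := Nat.mul_le_mul_right _ hamgm
          _ = (m+2) * ((m+2) * mu p * mu q) := by ring
      calc 4 ^ (m + 2 - 1) = 4 * (4 ^ (p-1) * 4 ^ (q-1)) := by
              rw [← pow_add]
              rw [show 4 * (4:ℕ) ^ (p - 1 + (q - 1)) = 4 ^ (p - 1 + (q - 1) + 1) from by ring]
              congr 1
              omega
        _ ≤ 4 * ((p * mu p) * (q * mu q)) := by
              have := Nat.mul_le_mul h1 h2
              omega
        _ ≤ (m+2) * ((m+2) * mu p * mu q) := key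
        _ = (m+2) * mu (m+2) := by rw [hmu]

/-- Upper bound via the balanced split. -/
lemma mu_ub (i : ℕ) : mu (2 ^ (i+1)) ≤ 2 ^ (i+1) * mu (2 ^ i) * mu (2 ^ i) := by
  have h2 : 2 ≤ 2 ^ (i+1) := by
    have := Nat.one_le_two_pow (n := i)
    calc (2:ℕ) = 2 * 1 := by ring
      _ ≤ 2 * 2 ^ i := by omega
      _ = 2 ^ (i+1) := by ring
  set m := 2 ^ (i+1) - 2 with hm
  have hmeq : 2 ^ (i+1) = m + 2 := by omega
  have hpmem : 2 ^ i ∈ Finset.Icc 1 (m + 1) := by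
    simp only [Finset.mem_Icc]
    constructor
    · exact Nat.one_le_two_pow
    · have : 2 ^ i + 2 ^ i = 2 ^ (i+1) := by ring
      omega
  have hle := Finset.inf'_le
    (f := fun p : {x // x ∈ Finset.Icc 1 (m+1)} => (m + 2) * mu p.1 * mu (m + 2 - p.1))
    (Finset.mem_attach _ (⟨2 ^ i, hpmem⟩ : {x // x ∈ Finset.Icc 1 (m+1)}))
  rw [hmeq, mu_eq]
  have hsub : m + 2 - 2 ^ i = 2 ^ i := by
    have : 2 ^ i + 2 ^ i = 2 ^ (i+1) := by ring
    omega
  have hsub2 : 2 ^ (i+1) - 2 ^ i = 2 ^ i := by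
    have : 2 ^ i + 2 ^ i = 2 ^ (i+1) := by ring
    omega
  exact le_trans hle (le_of_eq (by show (m + 2) * mu (2 ^ i) * mu (m + 2 - 2 ^ i) = _; rw [hsub]))

lemma mu_pow (i : ℕ) : mu (2 ^ i) = 2 ^ (2 ^ (i+1) - i - 2) := by
  induction i with
  | zero => simp [mu]
  | succ i ih =>
    have hi : i + 2 ≤ 2 ^ (i+1) := by
      have := Nat.lt_two_pow_self (n := i+1)
      omega
    have hub : mu (2 ^ (i+1)) ≤ 2 ^ (2 ^ (i+2) - (i+1) - 2) := by
      have := mu_ub i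
      rw [ih] at this
      calc mu (2 ^ (i+1)) ≤ 2 ^ (i+1) * 2 ^ (2 ^ (i+1) - i - 2) * 2 ^ (2 ^ (i+1) - i - 2) := this
        _ = 2 ^ ((i+1) + (2 ^ (i+1) - i - 2) + (2 ^ (i+1) - i - 2)) := by
            rw [← pow_add, ← pow_add]
        _ = 2 ^ (2 ^ (i+2) - (i+1) - 2) := by
            congr 1
            have h2 : 2 ^ (i+1) + 2 ^ (i+1) = 2 ^ (i+2) := by ring
            omega
    have hlb : 2 ^ (2 ^ (i+2) - (i+1) - 2) ≤ mu (2 ^ (i+1)) := by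
      have h := mu_lb (2 ^ (i+1)) Nat.one_le_two_pow
      have h4 : (4:ℕ) ^ (2 ^ (i+1) - 1) = 2 ^ (2 ^ (i+2) - 2) := by
        rw [show (4:ℕ) = 2 ^ 2 from rfl, ← pow_mul]
        congr 1
        have h2 : 2 ^ (i+1) + 2 ^ (i+1) = 2 ^ (i+2) := by ring
        have := Nat.one_le_two_pow (n := i+1)
        omega
      rw [h4] at h
      by_contra hcon
      push_neg at hcon
      have hlt : 2 ^ (i+1) * mu (2 ^ (i+1)) < 2 ^ (i+1) * 2 ^ (2 ^ (i+2) - (i+1) - 2) :=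
        Nat.mul_lt_mul_of_pos_left hcon (by positivity)
      rw [← pow_add] at hlt
      have heq : (i+1) + (2 ^ (i+2) - (i+1) - 2) = 2 ^ (i+2) - 2 := by
        have h2 : 2 ^ (i+1) + 2 ^ (i+1) = 2 ^ (i+2) := by ring
        omega
      rw [heq] at hlt
      omega
    show mu (2 ^ (i+1)) = 2 ^ (2 ^ (i+2) - (i+1) - 2)
    exact le_antisymm hub hlb

/-- For every integer `i ≥ 0`, `μ(2^i) = 2^(2·2^i - 2)/2^i = τ(2^i)`. -/
theorem stmt_4 (i : ℕ) : (mu (2 ^ i) : ℚ) = (2 : ℚ) ^ (2 * 2 ^ i - 2) / 2 ^ i := by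
  rw [mu_pow]
  rw [eq_div_iff (by positivity : (2:ℚ) ^ i ≠ 0)]
  rw [show ((2:ℚ) ^ i) = ((2:ℕ) : ℚ) ^ i from by norm_num]
  push_cast
  rw [← pow_add]
  congr 1
  have hi : i + 2 ≤ 2 ^ (i+1) := by
    have := Nat.lt_two_pow_self (n := i+1)
    omega
  have h2 : 2 ^ (i+1) = 2 * 2 ^ i := by ring
  omega
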